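/- For every μ > 0, t > 0 and every z ∈ ℂ, the regularized Gamma function satisfies the functional equation μ Γ_{μ,t}(z+1) = z Γ_{μ,t}(z) − (1/t) Γ_{μ,t}′(z), where Γ_{μ,t}′(z) denotes the complex derivative d/dz Γ_{μ,t}(z) (which exists and equals ∫_ℝ x e^{−μe^x} e^{zx} e^{−x²/(2t)} dx). -/

import Mathlib

open MeasureTheory Complex Real Filter Metric

/-- The regularized Gamma function `Γ_{μ,t}(z) = ∫_ℝ e^{-μe^x} e^{zx} e^{-x²/(2t)} dx`. -/
noncomputable def regGamma (μ t : ℝ) (z : ℂ) : ℂ :=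
  ∫ x : ℝ, Complex.exp ((-(μ * Real.exp x) : ℝ) : ℂ) * Complex.exp (z * (x : ℂ)) *
    Complex.exp ((-(x ^ 2 / (2 * t)) : ℝ) : ℂ)

private lemma intG {t : ℝ} (ht : 0 < t) (B : ℝ) :
    Integrable fun x : ℝ => Real.exp (B * x - x ^ 2 / (2 * t)) := by
  have hb : (0 : ℝ) < 1 / (2 * t) := by positivity
  have h := (integrable_cexp_quadratic (b := ((1 / (2 * t) : ℝ) : ℂ))
    (by simpa using hb) (B : ℂ) 0).norm
  refine h.congr (Filter.Eventually.of_forall fun x => ?_)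
  have : (-(((1 / (2 * t) : ℝ)) : ℂ) * (x : ℂ) ^ 2 + (B : ℂ) * (x : ℂ) + 0)
      = ((B * x - x ^ 2 / (2 * t) : ℝ) : ℂ) := by push_cast; ring
  show ‖cexp _‖ = _
  rw [this, Complex.norm_exp, Complex.ofReal_re]

private lemma abs_le_exp_add (x : ℝ) : |x| ≤ Real.exp x + Real.exp (-x) := by
  rcases abs_cases x with ⟨h, _⟩ | ⟨h, _⟩ <;> rw [h] <;>
    nlinarith [Real.add_one_le_exp x, Real.add_one_le_exp (-x), Real.exp_pos x, Real.exp_pos (-x)]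

private lemma intGx {t : ℝ} (ht : 0 < t) (B : ℝ) :
    Integrable fun x : ℝ => |x| * Real.exp (B * x - x ^ 2 / (2 * t)) := by
  refine ((intG ht (B + 1)).add (intG ht (B - 1))).mono'
    ((_root_.continuous_abs.mul (by fun_prop)).aestronglyMeasurable)
    (Filter.Eventually.of_forall fun x => ?_)
  have h1 : |x| * Real.exp (B * x - x ^ 2 / (2 * t))
      ≤ (Real.exp x + Real.exp (-x)) * Real.exp (B * x - x ^ 2 / (2 * t)) :=
    mul_le_mul_of_nonneg_right (abs_le_exp_add x) (Real.exp_nonneg _)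
  have h2 : (Real.exp x + Real.exp (-x)) * Real.exp (B * x - x ^ 2 / (2 * t))
      = Real.exp ((B + 1) * x - x ^ 2 / (2 * t)) + Real.exp ((B - 1) * x - x ^ 2 / (2 * t)) := by
    rw [add_mul, ← Real.exp_add, ← Real.exp_add]
    ring_nf
  simp only [Pi.add_apply]
  rw [show ‖|x| * rexp (B * x - x ^ 2 / (2 * t))‖ = |x| * rexp (B * x - x ^ 2 / (2 * t)) from abs_of_nonneg (by positivity)]
  linarith
private noncomputable def rgInt (μ t : ℝ) (z : ℂ) (x : ℝ) : ℂ :=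
  Complex.exp ((-(μ * Real.exp x) : ℝ) : ℂ) * Complex.exp (z * (x : ℂ)) *
    Complex.exp ((-(x ^ 2 / (2 * t)) : ℝ) : ℂ)

private lemma norm_rgInt (μ t : ℝ) (z : ℂ) (x : ℝ) :
    ‖rgInt μ t z x‖ = Real.exp (-(μ * Real.exp x) + z.re * x - x ^ 2 / (2 * t)) := by
  simp only [rgInt, norm_mul, Complex.norm_exp]
  rw [← Real.exp_add, ← Real.exp_add]
  congr 1
  simp only [Complex.mul_re, Complex.ofReal_re, Complex.ofReal_im, mul_zero, sub_zero]
  ring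

private lemma norm_rgInt_le (μ t : ℝ) (hμ : 0 < μ) (z : ℂ) (x : ℝ) :
    ‖rgInt μ t z x‖ ≤ Real.exp (z.re * x - x ^ 2 / (2 * t)) := by
  rw [norm_rgInt]
  apply Real.exp_le_exp.2
  have : 0 < μ * Real.exp x := by positivity
  linarith

private lemma cont_rgInt (μ t : ℝ) (z : ℂ) : Continuous (rgInt μ t z) := by
  unfold rgInt; fun_prop

private lemma int_rgInt (μ t : ℝ) (hμ : 0 < μ) (ht : 0 < t) (z : ℂ) :
    Integrable (rgInt μ t z) := by
  refine (intG ht z.re).mono' (cont_rgInt μ t z).aestronglyMeasurable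
    (Filter.Eventually.of_forall fun x => ?_)
  exact norm_rgInt_le μ t hμ z x

private lemma int_x_rgInt (μ t : ℝ) (hμ : 0 < μ) (ht : 0 < t) (z : ℂ) :
    Integrable (fun x : ℝ => (x : ℂ) * rgInt μ t z x) := by
  refine (intGx ht z.re).mono'
    ((Complex.continuous_ofReal.mul (cont_rgInt μ t z)).aestronglyMeasurable)
    (Filter.Eventually.of_forall fun x => ?_)
  rw [norm_mul, Complex.norm_real, _root_.Real.norm_eq_abs]
  exact mul_le_mul_of_nonneg_left (norm_rgInt_le μ t hμ z x) (abs_nonneg x)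

private lemma tendsto_exp_quad {t : ℝ} (ht : 0 < t) (B : ℝ) :
    Tendsto (fun x : ℝ => Real.exp (B * x - x ^ 2 / (2 * t))) atTop (nhds 0) ∧
    Tendsto (fun x : ℝ => Real.exp (B * x - x ^ 2 / (2 * t))) atBot (nhds 0) := by
  have h2t : (0 : ℝ) < 2 * t := by positivity
  have hdiv : Tendsto (fun x : ℝ => x / (2 * t)) atTop atTop :=
    tendsto_id.atTop_div_const h2t
  have hdivb : Tendsto (fun x : ℝ => x / (2 * t)) atBot atBot :=
    tendsto_id.atBot_div_const h2t
  have hs : Tendsto (fun x : ℝ => B - x / (2 * t)) atTop atBot := by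
    have := tendsto_atBot_add_const_left (l := atTop) B (tendsto_neg_atBot_iff.2 hdiv)
    refine this.congr fun x => ?_
    ring
  have hsb : Tendsto (fun x : ℝ => B - x / (2 * t)) atBot atTop := by
    have := tendsto_atTop_add_const_left (l := atBot) B (tendsto_neg_atTop_iff.2 hdivb)
    refine this.congr fun x => ?_
    ring
  have e1 : Tendsto (fun x : ℝ => B * x - x ^ 2 / (2 * t)) atTop atBot := by
    have := tendsto_id.atTop_mul_atBot₀ hs
    refine this.congr fun x => ?_
    simp only [id]
    ring
  have e2 : Tendsto (fun x : ℝ => B * x - x ^ 2 / (2 * t)) atBot atBot := by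
    have := tendsto_id.atBot_mul_atTop₀ hsb
    refine this.congr fun x => ?_
    simp only [id]
    ring
  exact ⟨Real.tendsto_exp_atBot.comp e1, Real.tendsto_exp_atBot.comp e2⟩

private lemma rgInt_hasDerivAt (μ t : ℝ) (z : ℂ) (x : ℝ) :
    HasDerivAt (fun x => rgInt μ t z x)
      (rgInt μ t z x * (((-(μ * Real.exp x) : ℝ) : ℂ) + z + ((-(x / t) : ℝ) : ℂ))) x := by
  have hx : ∀ y : ℝ, rgInt μ t z y = Complex.exp (((-(μ * Real.exp y) : ℝ) : ℂ) + z * (y : ℂ)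
        + ((-(y ^ 2 / (2 * t)) : ℝ) : ℂ)) := by
    intro y
    rw [Complex.exp_add, Complex.exp_add]
    rfl
  rw [funext hx]
  have h1 : HasDerivAt (fun x : ℝ => -(μ * Real.exp x)) (-(μ * Real.exp x)) x :=
    ((Real.hasDerivAt_exp x).const_mul μ).neg
  have h2 : HasDerivAt (fun x : ℝ => z * (x : ℂ)) z x := by
    simpa using ((hasDerivAt_id x).ofReal_comp).const_mul z
  have h3 : HasDerivAt (fun x : ℝ => -(x ^ 2 / (2 * t))) (-(x / t)) x := by
    have h := ((hasDerivAt_pow 2 x).div_const (2 * t)).neg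
    refine h.congr_deriv ?_
    by_cases h0 : t = 0
    · simp [h0]
    · field_simp
      ring
  have hG := (h1.ofReal_comp.add h2).add h3.ofReal_comp
  have := hG.cexp
  exact this

private lemma regGamma_eq (μ t : ℝ) (z : ℂ) : regGamma μ t z = ∫ x : ℝ, rgInt μ t z x := rfl

/-- For every `μ > 0`, `t > 0` and `z ∈ ℂ`, the complex derivative of `Γ_{μ,t}` at `z`
exists and equals `∫_ℝ x e^{-μe^x} e^{zx} e^{-x²/(2t)} dx`, and the functional equation
`μ Γ_{μ,t}(z+1) = z Γ_{μ,t}(z) - (1/t) Γ_{μ,t}'(z)` holds. -/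
theorem regGamma_functional_equation (μ t : ℝ) (hμ : 0 < μ) (ht : 0 < t) (z : ℂ) :
    HasDerivAt (regGamma μ t)
      (∫ x : ℝ, (x : ℂ) * (Complex.exp ((-(μ * Real.exp x) : ℝ) : ℂ) *
        Complex.exp (z * (x : ℂ)) * Complex.exp ((-(x ^ 2 / (2 * t)) : ℝ) : ℂ))) z ∧
    (μ : ℂ) * regGamma μ t (z + 1)
      = z * regGamma μ t z -
        (1 / (t : ℂ)) * ∫ x : ℝ, (x : ℂ) * (Complex.exp ((-(μ * Real.exp x) : ℝ) : ℂ) *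
          Complex.exp (z * (x : ℂ)) * Complex.exp ((-(x ^ 2 / (2 * t)) : ℝ) : ℂ)) := by
  have hint : ∀ w : ℂ, Integrable (rgInt μ t w) := int_rgInt μ t hμ ht
  have hintx : ∀ w : ℂ, Integrable (fun x : ℝ => (x : ℂ) * rgInt μ t w x) := int_x_rgInt μ t hμ ht
  constructor
  · -- derivative part
    set B : ℝ := |z.re| + 1 with hB
    clear_value B
    have hB0 : 0 ≤ B := by rw [hB]; positivity
    have hbound_int : Integrable (fun x : ℝ => |x| * Real.exp (B * |x| - x ^ 2 / (2 * t))) := by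
      refine ((intGx ht B).add (intGx ht (-B))).mono'
        ((_root_.continuous_abs.mul (by fun_prop)).aestronglyMeasurable)
        (Filter.Eventually.of_forall fun x => ?_)
      simp only [Pi.add_apply]
      rw [show ‖|x| * Real.exp (B * |x| - x ^ 2 / (2 * t))‖
          = |x| * Real.exp (B * |x| - x ^ 2 / (2 * t)) from abs_of_nonneg (by positivity)]
      rcases abs_cases x with ⟨h, _⟩ | ⟨h, _⟩
      · have : |x| * Real.exp (B * |x| - x ^ 2 / (2 * t))
            = |x| * Real.exp (B * x - x ^ 2 / (2 * t)) := by rw [h]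
        rw [this]
        nlinarith [Real.exp_pos ((-B) * x - x ^ 2 / (2 * t)), abs_nonneg x]
      · have : |x| * Real.exp (B * |x| - x ^ 2 / (2 * t))
            = |x| * Real.exp ((-B) * x - x ^ 2 / (2 * t)) := by rw [h]; ring_nf
        rw [this]
        nlinarith [Real.exp_pos (B * x - x ^ 2 / (2 * t)), abs_nonneg x]
    have hres := hasDerivAt_integral_of_dominated_loc_of_deriv_le (𝕜 := ℂ)
      (F := fun w x => rgInt μ t w x) (F' := fun w x => (x : ℂ) * rgInt μ t w x)
      (x₀ := z)
      (bound := fun x => |x| * Real.exp (B * |x| - x ^ 2 / (2 * t)))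
      (ball_mem_nhds z one_pos)
      (Filter.Eventually.of_forall fun w => (cont_rgInt μ t w).aestronglyMeasurable)
      (hint z)
      ((Complex.continuous_ofReal.mul (cont_rgInt μ t z)).aestronglyMeasurable)
      (Filter.Eventually.of_forall fun x => fun w hw => ?_)
      hbound_int
      (Filter.Eventually.of_forall fun x => fun w hw => ?_)
    · exact hres.2
    · -- bound
      rw [norm_mul, Complex.norm_real, _root_.Real.norm_eq_abs, norm_rgInt]
      refine mul_le_mul_of_nonneg_left (Real.exp_le_exp.2 ?_) (abs_nonneg x)
      have h1 : |w.re| ≤ B := by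
        have h2 : |(w - z).re| ≤ ‖w - z‖ := Complex.abs_re_le_norm _
        have h3 : ‖w - z‖ < 1 := by
          rw [mem_ball, Complex.dist_eq] at hw; exact hw
        have h4 : |w.re| - |z.re| ≤ |w.re - z.re| := abs_sub_abs_le_abs_sub _ _
        have h5 : |w.re - z.re| < 1 := by
          calc |w.re - z.re| = |(w - z).re| := by rw [Complex.sub_re]
          _ ≤ ‖w - z‖ := h2
          _ < 1 := h3
        rw [hB]; linarith
      have h6 : w.re * x ≤ B * |x| := by
        calc w.re * x ≤ |w.re * x| := le_abs_self _
        _ = |w.re| * |x| := abs_mul _ _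
        _ ≤ B * |x| := mul_le_mul_of_nonneg_right h1 (abs_nonneg x)
      have h7 : 0 < μ * Real.exp x := by positivity
      linarith
    · -- differentiability in w
      have h : HasDerivAt (fun w : ℂ => w * (x : ℂ)) ((x : ℂ)) w := by
        simpa using (hasDerivAt_id w).mul_const (x : ℂ)
      have h2 := ((h.cexp.const_mul
        (Complex.exp ((-(μ * Real.exp x) : ℝ) : ℂ))).mul_const
        (Complex.exp ((-(x ^ 2 / (2 * t)) : ℝ) : ℂ)))
      refine h2.congr_deriv ?_
      simp only [rgInt]
      ring
  · -- functional equation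
    set D : ℝ → ℂ := fun x => rgInt μ t z x *
      (((-(μ * Real.exp x) : ℝ) : ℂ) + z + ((-(x / t) : ℝ) : ℂ)) with hD
    have hD_eq : ∀ x : ℝ, D x = (-(μ : ℂ)) * rgInt μ t (z + 1) x + z * rgInt μ t z x
        + (-(1 / (t : ℂ))) * ((x : ℂ) * rgInt μ t z x) := by
      intro x
      have he : rgInt μ t (z + 1) x = ((Real.exp x : ℝ) : ℂ) * rgInt μ t z x := by
        simp only [rgInt, add_mul, one_mul, Complex.exp_add, ← Complex.ofReal_exp]
        ring
      rw [hD, he]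
      push_cast
      have ht' : (t : ℂ) ≠ 0 := Complex.ofReal_ne_zero.mpr ht.ne'
      field_simp
    have hD_int : Integrable D := by
      have h := (((hint (z + 1)).const_mul (-(μ : ℂ))).add ((hint z).const_mul z)).add
        ((hintx z).const_mul (-(1 / (t : ℂ))))
      exact h.congr (Filter.Eventually.of_forall fun x => (hD_eq x).symm)
    have htt : Tendsto (rgInt μ t z) atTop (nhds 0) :=
      squeeze_zero_norm (fun x => norm_rgInt_le μ t hμ z x) (tendsto_exp_quad ht z.re).1
    have htb : Tendsto (rgInt μ t z) atBot (nhds 0) :=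
      squeeze_zero_norm (fun x => norm_rgInt_le μ t hμ z x) (tendsto_exp_quad ht z.re).2
    have hIoi : ∫ x in Set.Ioi (0 : ℝ), D x = 0 - rgInt μ t z 0 :=
      integral_Ioi_of_hasDerivAt_of_tendsto' (fun x _ => rgInt_hasDerivAt μ t z x)
        hD_int.integrableOn htt
    have hIic : ∫ x in Set.Iic (0 : ℝ), D x = rgInt μ t z 0 - 0 :=
      integral_Iic_of_hasDerivAt_of_tendsto' (fun x _ => rgInt_hasDerivAt μ t z x)
        hD_int.integrableOn htb
    have htot : ∫ x : ℝ, D x = 0 := by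
      rw [← intervalIntegral.integral_Iic_add_Ioi hD_int.integrableOn hD_int.integrableOn, hIoi, hIic]
      ring
    have hsplit : ∫ x : ℝ, D x = (-(μ : ℂ)) * (∫ x : ℝ, rgInt μ t (z + 1) x)
        + z * (∫ x : ℝ, rgInt μ t z x)
        + (-(1 / (t : ℂ))) * (∫ x : ℝ, (x : ℂ) * rgInt μ t z x) := by
      have h0 : ∫ x : ℝ, D x = ∫ x : ℝ, ((-(μ : ℂ)) * rgInt μ t (z + 1) x + z * rgInt μ t z x
          + (-(1 / (t : ℂ))) * ((x : ℂ) * rgInt μ t z x)) :=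
        integral_congr_ae (Filter.Eventually.of_forall hD_eq)
      have i1 : Integrable (fun x : ℝ => (-(μ : ℂ)) * rgInt μ t (z + 1) x) :=
        (hint (z + 1)).const_mul _
      have i2 : Integrable (fun x : ℝ => z * rgInt μ t z x) := (hint z).const_mul z
      have i3 : Integrable (fun x : ℝ => (-(1 / (t : ℂ))) * ((x : ℂ) * rgInt μ t z x)) :=
        (hintx z).const_mul _
      have i12 : Integrable (fun x : ℝ => (-(μ : ℂ)) * rgInt μ t (z + 1) x
          + z * rgInt μ t z x) := i1.add i2
      rw [h0, integral_add i12 i3, integral_add i1 i2,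
        integral_const_mul, integral_const_mul, integral_const_mul]
    have key := hsplit.symm.trans htot
    rw [regGamma_eq, regGamma_eq]
    show (μ : ℂ) * ∫ x : ℝ, rgInt μ t (z + 1) x
      = z * (∫ x : ℝ, rgInt μ t z x) - (1 / (t : ℂ)) * ∫ x : ℝ, (x : ℂ) * rgInt μ t z x
    linear_combination -key
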